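/- Let (P₀, ι, a, p) be a PASP such that P₀ is OLON-free, let q be a ground atom, and let R ⊆ P₀ be a relevance-closed subprogram of P₀ with atom set B_R such that q ∈ B_R. Let ι_R = {i ∈ ι : aᵢ ∈ B_R}. Then the upper probability of q in the PASP (P₀, ι, a, p) equals the upper probability of q in the PASP (R, ι_R, a restricted to ι_R, p restricted to ι_R). -/

import Mathlib

open scoped Classical

/-- A ground normal rule: a head atom, a finite positive body and a finite negative body. -/
structure GRule (α : Type) where
  head : α
  pos : Finset α
  neg : Finset α

namespace ASP

variable {α ι : Type}

/-- The Gelfond–Lifschitz reduct of a program `P` w.r.t. an interpretation `I`: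
the set of positive rules `(head r, pos r)` for rules whose negative body avoids `I`. -/
def glReduct (P : Set (GRule α)) (I : Set α) : Set (α × Finset α) :=
  {hb | ∃ r ∈ P, (∀ c ∈ r.neg, c ∉ I) ∧ hb = (r.head, r.pos)}

/-- `J` is a model of a set of positive rules `Q`. -/
def IsModelPos (Q : Set (α × Finset α)) (J : Set α) : Prop :=
  ∀ hb ∈ Q, (∀ b ∈ hb.2, b ∈ J) → hb.1 ∈ J

/-- `A` is an answer set (stable model) of `P`. -/
def IsAnswerSet (P : Set (GRule α)) (A : Set α) : Prop :=
  IsModelPos (glReduct P A) A ∧ ∀ B, B ⊂ A → ¬ IsModelPos (glReduct P A) B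

/-- The set of answer sets of `P`. -/
def AS (P : Set (GRule α)) : Set (Set α) := {A | IsAnswerSet P A}

/-- Operator deriving new true atoms, given a three-valued interpretation `I = (I_T, I_F)`. -/
def opTrue (P : Set (GRule α)) (I : Set α × Set α) : Set α →o Set α where
  toFun T := {a | a ∉ I.1 ∧ ∃ r ∈ P, r.head = a ∧ (∀ b ∈ r.pos, b ∈ I.1 ∪ T) ∧
    ∀ c ∈ r.neg, c ∈ I.2}
  monotone' := by
    intro T T' hT a ha
    obtain ⟨h1, r, hr, hh, hp, hn⟩ := ha
    exact ⟨h1, r, hr, hh, fun b hb => (hp b hb).imp id fun h => hT h, hn⟩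

/-- Operator deriving new false atoms, given a three-valued interpretation `I = (I_T, I_F)`. -/
def opFalse (P : Set (GRule α)) (I : Set α × Set α) : Set α →o Set α where
  toFun F := {a | a ∉ I.2 ∧ ∀ r ∈ P, r.head = a →
    (∃ b ∈ r.pos, b ∈ I.2 ∪ F) ∨ ∃ c ∈ r.neg, c ∈ I.1}
  monotone' := by
    intro F F' hF a ha
    refine ⟨ha.1, fun r hr hh => ?_⟩
    rcases ha.2 r hr hh with ⟨b, hb, hbm⟩ | h
    · exact Or.inl ⟨b, hb, hbm.imp id fun h => hF h⟩
    · exact Or.inr h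

/-- The iterated fixpoint operator: `IFP(I) = I ⊔ (lfp (opTrue I), gfp (opFalse I))`. -/
def IFP (P : Set (GRule α)) (I : Set α × Set α) : Set α × Set α :=
  I ⊔ (OrderHom.lfp (opTrue P I), OrderHom.gfp (opFalse P I))

/-- The well-founded model of `P`: the least fixpoint of `IFP`
(as the infimum of all prefixpoints of the monotone operator `IFP`). -/
def WFM (P : Set (GRule α)) : Set α × Set α :=
  sInf {I | IFP P I ≤ I}

/-- The WF reduct of `P`: delete rules whose positive body meets the false atoms or whose
negative body meets the true atoms of the WFM, and remove from the remaining rules the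
true atoms from positive bodies and the false atoms from negative bodies. -/
noncomputable def WFreduct (P : Set (GRule α)) : Set (GRule α) :=
  {r' | ∃ r ∈ P, (∀ b ∈ r.pos, b ∉ (WFM P).2) ∧ (∀ c ∈ r.neg, c ∉ (WFM P).1) ∧
    r' = ⟨r.head, r.pos.filter (fun b => b ∉ (WFM P).1),
          r.neg.filter (fun c => c ∉ (WFM P).2)⟩}

/-- The set of atoms occurring in a set of rules (as heads or in bodies). -/
def atomsOf (R : Set (GRule α)) : Set α :=
  {a | ∃ r ∈ R, a = r.head ∨ a ∈ r.pos ∨ a ∈ r.neg}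

/-- `R` is a relevance-closed subprogram of `P`. -/
def RelevanceClosed (P R : Set (GRule α)) : Prop :=
  R ⊆ P ∧ ∀ r ∈ P, r.head ∈ atomsOf R → r ∈ R

/-- Signed edge of the dependency graph of `P`; `s = true` marks a negative edge. -/
def Edge (P : Set (GRule α)) (x y : α) (s : Bool) : Prop :=
  ∃ r ∈ P, r.head = x ∧ ((s = false ∧ y ∈ r.pos) ∨ (s = true ∧ y ∈ r.neg))

/-- `Reaches P x y b`: there is a nonempty walk in the signed dependency graph from `x`
to `y` whose number of negative edges has parity `b` (`true` = odd). -/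
inductive Reaches (P : Set (GRule α)) : α → α → Bool → Prop
  | single {x y s} : Edge P x y s → Reaches P x y s
  | step {x y z s t} : Edge P x y s → Reaches P y z t → Reaches P x z (xor s t)

/-- `P` has no odd loops over negation. -/
def OLONFree (P : Set (GRule α)) : Prop := ∀ a : α, ¬ Reaches P a a true

/-- The program of a world `w`: `P₀` plus the facts `aᵢ` for `i ∈ w`. -/
def worldProg (P0 : Set (GRule α)) (atom : ι → α) (w : Finset ι) : Set (GRule α) :=
  P0 ∪ {r | ∃ i ∈ w, r = ⟨atom i, ∅, ∅⟩}

/-- The probability of a world `w` of a PASP with index set `S`. -/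
noncomputable def worldP (prob : ι → ℝ) (S w : Finset ι) : ℝ :=
  (∏ i ∈ w, prob i) * ∏ i ∈ S \ w, (1 - prob i)

/-- The upper probability of a query `q` in the PASP `(P₀, S, atom, prob)`. -/
noncomputable def UP (P0 : Set (GRule α)) (atom : ι → α) (prob : ι → ℝ)
    (S : Finset ι) (q : α) : ℝ :=
  ∑ w ∈ S.powerset.filter (fun w => ∃ A ∈ AS (worldProg P0 atom w), q ∈ A),
    worldP prob S w

/-- The lower probability of a query `q` in the PASP `(P₀, S, atom, prob)`. -/
noncomputable def LP (P0 : Set (GRule α)) (atom : ι → α) (prob : ι → ℝ)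
    (S : Finset ι) (q : α) : ℝ :=
  ∑ w ∈ S.powerset.filter (fun w => ∀ A ∈ AS (worldProg P0 atom w), q ∈ A),
    worldP prob S w

/-- `(P₀, S, atom, prob)` is a PASP: `P₀` is finite, the probabilistic atoms are pairwise
distinct, none of them is the head of a rule of `P₀`, and probabilities lie in `[0,1]`. -/
def IsPASP (P0 : Set (GRule α)) (atom : ι → α) (prob : ι → ℝ) (S : Finset ι) : Prop :=
  P0.Finite ∧ Set.InjOn atom ↑S ∧ (∀ i ∈ S, ∀ r ∈ P0, r.head ≠ atom i) ∧
    ∀ i ∈ S, prob i ∈ Set.Icc (0 : ℝ) 1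

end ASP

section Aux
open ASP
variable {α ι : Type}

/-- Least model of a positive program: intersection of all models. -/
def lm (Q : Set (α × Finset α)) : Set α := ⋂₀ {J | IsModelPos Q J}

lemma isModelPos_lm (Q : Set (α × Finset α)) : IsModelPos Q (lm Q) := by
  intro hb hq hpos
  refine Set.mem_sInter.mpr fun J hJ => hJ hb hq fun b hb' => ?_
  exact Set.mem_sInter.mp (hpos b hb') J hJ

lemma lm_le {Q : Set (α × Finset α)} {J : Set α} (h : IsModelPos Q J) : lm Q ⊆ J :=
  Set.sInter_subset_of_mem h

lemma lm_mono {Q' Q : Set (α × Finset α)} (h : Q' ⊆ Q) : lm Q' ⊆ lm Q := by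
  intro a ha
  refine Set.mem_sInter.mpr fun J hJ => Set.mem_sInter.mp ha J ?_
  exact fun hb hbq => hJ hb (h hbq)

lemma lm_subset_heads (Q : Set (α × Finset α)) : lm Q ⊆ {a | ∃ hb ∈ Q, hb.1 = a} := by
  have h : IsModelPos Q (lm Q ∩ {a | ∃ hb ∈ Q, hb.1 = a}) := by
    intro hb hq hpos
    exact ⟨isModelPos_lm Q hb hq (fun b hb' => (hpos b hb').1), ⟨hb, hq, rfl⟩⟩
  exact fun a ha => (lm_le h ha).2

lemma mem_AS_iff (P : Set (GRule α)) (A : Set α) :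
    A ∈ AS P ↔ lm (glReduct P A) = A := by
  constructor
  · rintro ⟨hmod, hmin⟩
    by_contra hne
    have hsub : lm (glReduct P A) ⊆ A := lm_le hmod
    exact hmin _ (HasSubset.Subset.ssubset_of_ne hsub hne) (isModelPos_lm _)
  · intro h
    constructor
    · have := isModelPos_lm (glReduct P A); rwa [h] at this
    · intro B hB hBmod
      have := lm_le hBmod; rw [h] at this
      exact absurd this (fun hab => hB.2 hab)

lemma AS_subset_heads {P : Set (GRule α)} {A : Set α} (h : A ∈ AS P) :
    A ⊆ {a | ∃ r ∈ P, r.head = a} := by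
  intro a ha
  rw [mem_AS_iff] at h
  rw [← h] at ha
  obtain ⟨hb, ⟨r, hr, _, rfl⟩, h2⟩ := lm_subset_heads _ ha
  exact ⟨r, hr, h2⟩

/-- L1: restriction of the least model to a "closed" head set. -/
lemma lm_inter {Q : Set (α × Finset α)} {B : Set α}
    (h : ∀ hb ∈ Q, hb.1 ∈ B → ∀ b ∈ hb.2, b ∈ B) :
    lm Q ∩ B = lm {hb ∈ Q | hb.1 ∈ B} := by
  have hQB : lm {hb ∈ Q | hb.1 ∈ B} ⊆ B := by
    intro a ha
    obtain ⟨hb, hhb, heq⟩ := lm_subset_heads _ ha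
    exact heq ▸ hhb.2
  apply Set.Subset.antisymm
  · have hmod : IsModelPos Q (lm {hb ∈ Q | hb.1 ∈ B} ∪ (lm Q \ B)) := by
      intro hb hq hpos
      by_cases hB : hb.1 ∈ B
      · refine Or.inl (isModelPos_lm _ hb ⟨hq, hB⟩ fun b hbmem => ?_)
        rcases hpos b hbmem with h1 | h2
        · exact h1
        · exact absurd (h hb hq hB b hbmem) h2.2
      · refine Or.inr ⟨isModelPos_lm _ hb hq fun b hbmem => ?_, hB⟩
        rcases hpos b hbmem with h1 | h2
        · exact lm_mono (fun p hp => hp.1) h1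
        · exact h2.1
    rintro a ⟨haQ, haB⟩
    rcases lm_le hmod haQ with h1 | h2
    · exact h1
    · exact absurd haB h2.2
  · exact fun a ha => ⟨lm_mono (fun p hp => hp.1) ha, hQB ha⟩

/-- Partial evaluation of the non-`B` part of a positive program w.r.t. `X`. -/
def posTop (Q : Set (α × Finset α)) (B X : Set α) : Set (α × Finset α) :=
  {hb | ∃ p ∈ Q, p.1 ∉ B ∧ (∀ b ∈ p.2, b ∈ B → b ∈ X) ∧
    hb = (p.1, p.2.filter (fun b => b ∉ B))}

lemma lm_posTop_disj (Q : Set (α × Finset α)) (B X : Set α) :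
    ∀ a ∈ lm (posTop Q B X), a ∉ B := by
  intro a ha
  obtain ⟨hb, ⟨p, _, hp1, _, rfl⟩, heq⟩ := lm_subset_heads _ ha
  exact heq ▸ hp1

/-- L2: the non-`B` part of the least model is the least model of the evaluated top. -/
lemma lm_diff {Q : Set (α × Finset α)} {B : Set α}
    (h : ∀ hb ∈ Q, hb.1 ∈ B → ∀ b ∈ hb.2, b ∈ B) :
    lm Q \ B = lm (posTop Q B (lm Q ∩ B)) := by
  set X := lm Q ∩ B with hX
  set E := posTop Q B X with hE
  have hEB : ∀ a ∈ lm E, a ∉ B := lm_posTop_disj Q B X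
  apply Set.Subset.antisymm
  · -- lm Q ⊆ X ∪ lm E
    have hmod : IsModelPos Q (X ∪ lm E) := by
      intro hb hq hpos
      by_cases hB : hb.1 ∈ B
      · have hposX : ∀ b ∈ hb.2, b ∈ lm Q := by
          intro b hbm
          rcases hpos b hbm with h1 | h2
          · exact h1.1
          · exact absurd (h hb hq hB b hbm) (hEB b h2)
        exact Or.inl ⟨isModelPos_lm _ hb hq hposX, hB⟩
      · have hcond : ∀ b ∈ hb.2, b ∈ B → b ∈ X := by
          intro b hbm hbB
          rcases hpos b hbm with h1 | h2
          · exact h1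
          · exact absurd hbB (hEB b h2)
        have hmem : (hb.1, hb.2.filter (fun b => b ∉ B)) ∈ E :=
          ⟨hb, hq, hB, hcond, rfl⟩
        have := isModelPos_lm E (hb.1, hb.2.filter (fun b => b ∉ B)) hmem
        refine Or.inr (this ?_)
        intro b hbm
        simp only [Finset.mem_filter] at hbm
        rcases hpos b hbm.1 with h1 | h2
        · exact absurd h1.2 hbm.2
        · exact h2
    intro a ⟨haQ, haB⟩
    rcases lm_le hmod haQ with h1 | h2
    · exact absurd h1.2 haB
    · exact h2
  · -- lm E ⊆ lm Q \ B
    have hmod : IsModelPos E (lm Q \ B) := by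
      rintro hb ⟨p, hpQ, hp1, hcond, rfl⟩ hpos
      have : ∀ b ∈ p.2, b ∈ lm Q := by
        intro b hbm
        by_cases hbB : b ∈ B
        · exact (hcond b hbm hbB).1
        · exact (hpos b (Finset.mem_filter.mpr ⟨hbm, hbB⟩)).1
      exact ⟨isModelPos_lm _ p hpQ this, hp1⟩
    intro a ha
    exact lm_le hmod ha

end Aux

section Aux2
open ASP
variable {α ι : Type}

lemma glReduct_congr {P : Set (GRule α)} {I I' : Set α}
    (h : ∀ r ∈ P, ∀ c ∈ r.neg, (c ∈ I ↔ c ∈ I')) : glReduct P I = glReduct P I' := by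
  ext hb
  constructor
  · rintro ⟨r, hr, hneg, rfl⟩
    exact ⟨r, hr, fun c hc hcI => hneg c hc ((h r hr c hc).mpr hcI), rfl⟩
  · rintro ⟨r, hr, hneg, rfl⟩
    exact ⟨r, hr, fun c hc hcI => hneg c hc ((h r hr c hc).mp hcI), rfl⟩

lemma reduct_filter (P : Set (GRule α)) (B : Set α) (I : Set α) :
    {hb ∈ glReduct P I | hb.1 ∈ B} = glReduct {r ∈ P | r.head ∈ B} I := by
  ext hb
  constructor
  · rintro ⟨⟨r, hr, hneg, rfl⟩, hB⟩
    exact ⟨r, ⟨hr, hB⟩, hneg, rfl⟩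
  · rintro ⟨r, ⟨hr, hB⟩, hneg, rfl⟩
    exact ⟨⟨r, hr, hneg, rfl⟩, hB⟩

lemma reduct_closed {P : Set (GRule α)} {B : Set α} {I : Set α}
    (hpos : ∀ r ∈ P, r.head ∈ B → ∀ b ∈ r.pos, b ∈ B) :
    ∀ hb ∈ glReduct P I, hb.1 ∈ B → ∀ b ∈ hb.2, b ∈ B := by
  rintro hb ⟨r, hr, _, rfl⟩ hB b hbm
  exact hpos r hr hB b hbm

/-- Bottom part of the splitting theorem: the trace of an answer set on a closed
head set is an answer set of the bottom program. -/
lemma AS_inter {P : Set (GRule α)} {B : Set α}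
    (hcl : ∀ r ∈ P, r.head ∈ B → (∀ b ∈ r.pos, b ∈ B) ∧ (∀ c ∈ r.neg, c ∈ B))
    {A : Set α} (hA : A ∈ AS P) : A ∩ B ∈ AS {r ∈ P | r.head ∈ B} := by
  rw [mem_AS_iff] at hA ⊢
  have h1 : glReduct {r ∈ P | r.head ∈ B} (A ∩ B) = glReduct {r ∈ P | r.head ∈ B} A := by
    apply glReduct_congr
    rintro r ⟨hr, hB⟩ c hc
    exact ⟨fun h => h.1, fun h => ⟨h, (hcl r hr hB).2 c hc⟩⟩
  rw [h1, ← reduct_filter, ← lm_inter (reduct_closed fun r hr hB => (hcl r hr hB).1), hA]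

/-- The partial evaluation of the top of a program w.r.t. a bottom answer set `X`. -/
def evalTop (P : Set (GRule α)) (B X : Set α) : Set (GRule α) :=
  {r' | ∃ r ∈ P, r.head ∉ B ∧ (∀ b ∈ r.pos, b ∈ B → b ∈ X) ∧ (∀ c ∈ r.neg, c ∈ B → c ∉ X) ∧
    r' = ⟨r.head, r.pos.filter (fun b => b ∉ B), r.neg.filter (fun c => c ∉ B)⟩}

/-- Combination part of the splitting theorem. -/
lemma AS_union {P : Set (GRule α)} {B : Set α}
    (hcl : ∀ r ∈ P, r.head ∈ B → (∀ b ∈ r.pos, b ∈ B) ∧ (∀ c ∈ r.neg, c ∈ B))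
    {X Y : Set α} (hX : X ∈ AS {r ∈ P | r.head ∈ B})
    (hY : Y ∈ AS (evalTop P B X)) : X ∪ Y ∈ AS P := by
  have hXB : X ⊆ B := by
    intro a ha
    obtain ⟨r, ⟨_, hB⟩, rfl⟩ := AS_subset_heads hX ha
    exact hB
  have hYB : ∀ a ∈ Y, a ∉ B := by
    intro a ha
    obtain ⟨r', ⟨r, _, hB, _, _, rfl⟩, rfl⟩ := AS_subset_heads hY ha
    exact hB
  rw [mem_AS_iff] at hX hY ⊢
  set Q := glReduct P (X ∪ Y) with hQdef
  have hq : ∀ hb ∈ Q, hb.1 ∈ B → ∀ b ∈ hb.2, b ∈ B :=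
    reduct_closed fun r hr hB => (hcl r hr hB).1
  -- Step 1: lm Q ∩ B = X
  have step1 : lm Q ∩ B = X := by
    rw [lm_inter hq, reduct_filter]
    have : glReduct {r ∈ P | r.head ∈ B} (X ∪ Y) = glReduct {r ∈ P | r.head ∈ B} X := by
      apply glReduct_congr
      rintro r ⟨hr, hB⟩ c hc
      have hcB : c ∈ B := (hcl r hr hB).2 c hc
      constructor
      · rintro (h | h)
        · exact h
        · exact absurd hcB (hYB c h)
      · exact fun h => Or.inl h
    rw [this, hX]
  -- Step 2: posTop Q B X = glReduct (evalTop P B X) Y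
  have step2 : posTop Q B X = glReduct (evalTop P B X) Y := by
    ext hb
    constructor
    · rintro ⟨p, ⟨r, hr, hneg, rfl⟩, hp1, hcond, rfl⟩
      refine ⟨⟨r.head, r.pos.filter (fun b => b ∉ B), r.neg.filter (fun c => c ∉ B)⟩,
        ⟨r, hr, hp1, hcond, ?_, rfl⟩, ?_, rfl⟩
      · intro c hc hcB hcX
        exact hneg c hc (Or.inl hcX)
      · intro c hc hcY
        simp only [Finset.mem_filter] at hc
        exact hneg c hc.1 (Or.inr hcY)
    · rintro ⟨r', ⟨r, hr, hB, hposB, hnegB, rfl⟩, hneg, rfl⟩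
      refine ⟨(r.head, r.pos), ⟨r, hr, ?_, rfl⟩, hB, hposB, rfl⟩
      intro c hc
      rintro (hcX | hcY)
      · exact hnegB c hc (hXB hcX) hcX
      · by_cases hcB : c ∈ B
        · exact hYB c hcY hcB
        · exact hneg c (Finset.mem_filter.mpr ⟨hc, hcB⟩) hcY
  have step3 : lm Q \ B = Y := by
    rw [lm_diff hq, step1, step2, hY]
  calc lm Q = (lm Q ∩ B) ∪ (lm Q \ B) := (Set.inter_union_diff _ _).symm
    _ = X ∪ Y := by rw [step1, step3]

end Aux2

section Aux3
open ASP
variable {α ι : Type}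

/-- The Gelfond–Lifschitz operator. -/
def gam (P : Set (GRule α)) (I : Set α) : Set α := lm (glReduct P I)

lemma glReduct_anti {P : Set (GRule α)} {I I' : Set α} (h : I ⊆ I') :
    glReduct P I' ⊆ glReduct P I := by
  rintro hb ⟨r, hr, hneg, rfl⟩
  exact ⟨r, hr, fun c hc hcI => hneg c hc (h hcI), rfl⟩

lemma gam_anti {P : Set (GRule α)} {I I' : Set α} (h : I ⊆ I') : gam P I' ⊆ gam P I :=
  lm_mono (glReduct_anti h)

/-- The square of the GL operator, as a monotone map. -/
def gam2 (P : Set (GRule α)) : Set α →o Set α where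
  toFun I := gam P (gam P I)
  monotone' := fun _ _ h => gam_anti (gam_anti h)

lemma gam_inter (P : Set (GRule α)) (B I : Set α)
    (hpos : ∀ r ∈ P, r.head ∈ B → ∀ b ∈ r.pos, b ∈ B) :
    gam P I ∩ B = lm (glReduct {r ∈ P | r.head ∈ B} I) := by
  rw [gam, lm_inter (reduct_closed hpos), reduct_filter]

/-- Every signed program has an answer set. -/
lemma signed_exists_AS {P : Set (GRule α)} {S : Set α}
    (hs : ∀ r ∈ P, (r.head ∈ S → (∀ b ∈ r.pos, b ∈ S) ∧ (∀ c ∈ r.neg, c ∉ S)) ∧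
      (r.head ∉ S → (∀ b ∈ r.pos, b ∉ S) ∧ (∀ c ∈ r.neg, c ∈ S))) :
    ∃ A, A ∈ AS P := by
  obtain ⟨L, hfix⟩ : ∃ L, gam P (gam P L) = L := ⟨_, OrderHom.map_lfp (gam2 P)⟩
  have hposS : ∀ r ∈ P, r.head ∈ S → ∀ b ∈ r.pos, b ∈ S :=
    fun r hr hB => ((hs r hr).1 hB).1
  have hposNS : ∀ r ∈ P, r.head ∈ Sᶜ → ∀ b ∈ r.pos, b ∈ Sᶜ :=
    fun r hr hB => ((hs r hr).2 hB).1
  have hMS : ∀ c, c ∈ S → (c ∈ (gam P L ∩ S) ∪ (L \ S) ↔ c ∈ gam P L) := by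
    intro c hcS
    constructor
    · rintro (h | h)
      · exact h.1
      · exact absurd hcS h.2
    · exact fun h => Or.inl ⟨h, hcS⟩
  have hMnS : ∀ c, c ∉ S → (c ∈ (gam P L ∩ S) ∪ (L \ S) ↔ c ∈ L) := by
    intro c hcS
    constructor
    · rintro (h | h)
      · exact absurd h.2 hcS
      · exact h.1
    · exact fun h => Or.inr ⟨h, hcS⟩
  have part1 : gam P ((gam P L ∩ S) ∪ (L \ S)) ∩ S = gam P L ∩ S := by
    have key : glReduct {r ∈ P | r.head ∈ S} ((gam P L ∩ S) ∪ (L \ S))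
        = glReduct {r ∈ P | r.head ∈ S} L := by
      apply glReduct_congr
      rintro r ⟨hr, hB⟩ c hc
      exact hMnS c (((hs r hr).1 hB).2 c hc)
    rw [gam_inter P S _ hposS, key, ← gam_inter P S L hposS]
  have part2 : gam P ((gam P L ∩ S) ∪ (L \ S)) ∩ Sᶜ = L ∩ Sᶜ := by
    have h2 : gam P (gam P L) ∩ Sᶜ = L ∩ Sᶜ := by rw [hfix]
    have key : glReduct {r ∈ P | r.head ∈ Sᶜ} ((gam P L ∩ S) ∪ (L \ S))
        = glReduct {r ∈ P | r.head ∈ Sᶜ} (gam P L) := by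
      apply glReduct_congr
      rintro r ⟨hr, hB⟩ c hc
      exact hMS c (((hs r hr).2 hB).2 c hc)
    rw [gam_inter P Sᶜ _ hposNS, key, ← gam_inter P Sᶜ (gam P L) hposNS, h2]
  refine ⟨(gam P L ∩ S) ∪ (L \ S), (mem_AS_iff _ _).mpr ?_⟩
  calc lm (glReduct P ((gam P L ∩ S) ∪ (L \ S)))
      = gam P ((gam P L ∩ S) ∪ (L \ S)) := rfl
    _ = gam P ((gam P L ∩ S) ∪ (L \ S)) ∩ S ∪ gam P ((gam P L ∩ S) ∪ (L \ S)) ∩ Sᶜ :=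
        (Set.inter_union_compl _ _).symm
    _ = (gam P L ∩ S) ∪ (L ∩ Sᶜ) := by rw [part1, part2]
    _ = (gam P L ∩ S) ∪ (L \ S) := by rw [Set.diff_eq]

end Aux3

section Aux4
open ASP
variable {α ι : Type}

lemma reaches_trans {P : Set (GRule α)} {x y z : α} {s t : Bool}
    (h1 : Reaches P x y s) (h2 : Reaches P y z t) : Reaches P x z (xor s t) := by
  induction h1 with
  | single e => exact .step e h2
  | step e _ ih =>
    have := Reaches.step e (ih h2)
    rwa [← Bool.xor_assoc] at this

lemma reaches_mono {P P' : Set (GRule α)}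
    (h : ∀ x y s, Edge P x y s → Edge P' x y s) {x y : α} {b : Bool}
    (hr : Reaches P x y b) : Reaches P' x y b := by
  induction hr with
  | single e => exact .single (h _ _ _ e)
  | step e _ ih => exact .step (h _ _ _ e) ih

lemma olonFree_mono {P P' : Set (GRule α)}
    (h : ∀ x y s, Edge P x y s → Edge P' x y s) (h' : OLONFree P') : OLONFree P :=
  fun a ha => h' a (reaches_mono h ha)

lemma olonFree_subset {P P' : Set (GRule α)} (h : P ⊆ P') (h' : OLONFree P') :
    OLONFree P :=
  olonFree_mono (fun _ _ _ ⟨r, hr, h1, h2⟩ => ⟨r, h hr, h1, h2⟩) h'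

lemma edge_head_mem {P : Set (GRule α)} {x y : α} {s : Bool} (h : Edge P x y s) :
    x ∈ atomsOf P := by
  obtain ⟨r, hr, hh, _⟩ := h
  exact ⟨r, hr, Or.inl hh.symm⟩

lemma edge_tgt_mem {P : Set (GRule α)} {x y : α} {s : Bool} (h : Edge P x y s) :
    y ∈ atomsOf P := by
  obtain ⟨r, hr, _, h2⟩ := h
  rcases h2 with ⟨_, h2⟩ | ⟨_, h2⟩
  · exact ⟨r, hr, Or.inr (Or.inl h2)⟩
  · exact ⟨r, hr, Or.inr (Or.inr h2)⟩

lemma reaches_tgt_mem {P : Set (GRule α)} {x y : α} {b : Bool}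
    (h : Reaches P x y b) : y ∈ atomsOf P := by
  induction h with
  | single e => exact edge_tgt_mem e
  | step _ _ ih => exact ih

lemma atomsOf_finite {P : Set (GRule α)} (h : P.Finite) : (atomsOf P).Finite := by
  have hsub : atomsOf P ⊆ ⋃ r ∈ P, (insert r.head (↑r.pos ∪ ↑r.neg) : Set α) := by
    rintro a ⟨r, hr, h2⟩
    refine Set.mem_biUnion hr ?_
    rcases h2 with h2 | h2 | h2
    · exact Or.inl h2
    · exact Or.inr (Or.inl h2)
    · exact Or.inr (Or.inr h2)
  exact (h.biUnion fun r _ => ((r.pos.finite_toSet.union r.neg.finite_toSet).insert r.head)).subset hsub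

lemma AS_empty : (∅ : Set α) ∈ AS (∅ : Set (GRule α)) := by
  rw [mem_AS_iff]
  have h1 : glReduct (∅ : Set (GRule α)) (∅ : Set α) = ∅ := by
    ext hb; simp [glReduct]
  rw [h1]
  apply Set.Subset.antisymm
  · exact lm_le (fun hb hq _ => absurd hq (Set.notMem_empty _))
  · exact Set.empty_subset _

lemma edge_evalTop {P : Set (GRule α)} {B X : Set α} {x y : α} {s : Bool}
    (h : Edge (evalTop P B X) x y s) : Edge P x y s := by
  obtain ⟨r', ⟨r, hr, _, _, _, rfl⟩, hh, hb⟩ := h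
  refine ⟨r, hr, hh, ?_⟩
  rcases hb with ⟨hs, hb⟩ | ⟨hs, hb⟩
  · exact Or.inl ⟨hs, (Finset.mem_filter.mp hb).1⟩
  · exact Or.inr ⟨hs, (Finset.mem_filter.mp hb).1⟩

/-- Dung's theorem: every finite OLON-free program has an answer set. -/
lemma dung_aux : ∀ n : ℕ, ∀ P : Set (GRule α), P.Finite → OLONFree P →
    (atomsOf P).ncard ≤ n → ∃ A, A ∈ AS P := by
  intro n
  induction n with
  | zero =>
    intro P hfin holon hcard
    have hA : atomsOf P = ∅ := by
      have := (atomsOf_finite hfin)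
      rw [← Set.ncard_eq_zero this]
      omega
    have hP : P = ∅ := by
      ext r
      simp only [Set.mem_empty_iff_false, iff_false]
      intro hr
      have : r.head ∈ atomsOf P := ⟨r, hr, Or.inl rfl⟩
      rw [hA] at this
      exact this
    exact ⟨∅, hP ▸ AS_empty⟩
  | succ n ih =>
    intro P hfin holon hcard
    by_cases hemp : atomsOf P = ∅
    · have hP : P = ∅ := by
        ext r
        simp only [Set.mem_empty_iff_false, iff_false]
        intro hr
        have : r.head ∈ atomsOf P := ⟨r, hr, Or.inl rfl⟩
        rw [hemp] at this
        exact this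
      exact ⟨∅, hP ▸ AS_empty⟩
    · -- main case
      have hAfin : (atomsOf P).Finite := atomsOf_finite hfin
      -- reachability closure
      set C : α → Set α := fun x => {y | y = x ∨ ∃ b, Reaches P x y b} with hCdef
      have hCself : ∀ x, x ∈ C x := fun x => Or.inl rfl
      have hCsub : ∀ x ∈ atomsOf P, C x ⊆ atomsOf P := by
        rintro x hx y (rfl | ⟨b, hb⟩)
        · exact hx
        · exact reaches_tgt_mem hb
      have hCedge : ∀ x, ∀ y ∈ C x, ∀ z s, Edge P y z s → z ∈ C x := by
        rintro x y (rfl | ⟨b, hb⟩) z s he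
        · exact Or.inr ⟨s, .single he⟩
        · exact Or.inr ⟨_, reaches_trans hb (.single he)⟩
      have hCtrans : ∀ x, ∀ y ∈ C x, C y ⊆ C x := by
        intro x y hy z hz
        rcases hz with h | ⟨b', hb'⟩
        · exact h ▸ hy
        · rcases hy with h2 | ⟨b, hb⟩
          · exact Or.inr ⟨b', by rw [← h2]; exact hb'⟩
          · exact Or.inr ⟨_, reaches_trans hb hb'⟩
      -- choose x minimizing the size of C x
      obtain ⟨x, hxA, hxmin⟩ := Set.exists_min_image (atomsOf P)
        (fun a => (C a).ncard) hAfin (Set.nonempty_iff_ne_empty.mpr hemp)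
      have hCx_fin : (C x).Finite := hAfin.subset (hCsub x hxA)
      -- strong connectivity of C x
      have hback : ∀ y ∈ C x, x ∈ C y := by
        intro y hy
        by_contra hxy
        have hss : C y ⊂ C x := ⟨hCtrans x y hy, fun hsub => hxy (hsub (hCself x))⟩
        have : (C y).ncard < (C x).ncard := Set.ncard_lt_ncard hss hCx_fin
        have hyA : y ∈ atomsOf P := hCsub x hxA hy
        have := hxmin y hyA
        omega
      -- the sign set
      set SS : Set α := {y | y = x ∨ Reaches P x y false} with hSSdef
      have hpar : ∀ y ∈ C x, Reaches P x y true → y ∉ SS := by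
        intro y hy hr hin
        rcases hin with h | hr'
        · exact holon _ (h ▸ hr)
        · rcases hback y hy with h2 | ⟨t, ht⟩
          · exact holon _ (h2 ▸ hr)
          · cases t with
            | false => exact holon _ (by simpa using reaches_trans hr ht)
            | true => exact holon _ (by simpa using reaches_trans hr' ht)
      have hxSS : x ∈ SS := Or.inl rfl
      have hreachS : ∀ y, y ∈ SS → y ∈ C x := by
        intro y hy
        rcases hy with h | hr
        · rw [h]; exact hCself x
        · exact Or.inr ⟨_, hr⟩
      -- reach with given parity from x through a rule whose head is in C x
      have hedge_reach : ∀ (h : α), h ∈ SS → ∀ y s, Edge P h y s → Reaches P x y s := by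
        intro h hS y s he
        rcases hS with h1 | hr
        · rw [← h1]; exact .single he
        · simpa using reaches_trans hr (.single he)
      have hedge_reach' : ∀ (h : α), h ∈ C x → h ∉ SS → ∀ y s, Edge P h y s →
          Reaches P x y (xor true s) := by
        intro h hC hns y s he
        rcases hC with h1 | ⟨b, hb⟩
        · exact absurd (by rw [h1]; exact hxSS) hns
        · cases b with
          | false => exact absurd (Or.inr hb) hns
          | true => exact reaches_trans hb (.single he)
      -- signing of the bottom program
      have hsign : ∀ r ∈ {r ∈ P | r.head ∈ C x},
          (r.head ∈ SS → (∀ b ∈ r.pos, b ∈ SS) ∧ (∀ c ∈ r.neg, c ∉ SS)) ∧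
          (r.head ∉ SS → (∀ b ∈ r.pos, b ∉ SS) ∧ (∀ c ∈ r.neg, c ∈ SS)) := by
        rintro r ⟨hr, hrC⟩
        constructor
        · intro hhS
          constructor
          · intro b hb
            exact Or.inr (hedge_reach r.head hhS b false ⟨r, hr, rfl, Or.inl ⟨rfl, hb⟩⟩)
          · intro c hc
            have hrch : Reaches P x c true :=
              hedge_reach r.head hhS c true ⟨r, hr, rfl, Or.inr ⟨rfl, hc⟩⟩
            exact hpar c (Or.inr ⟨_, hrch⟩) hrch
        · intro hhS
          constructor
          · intro b hb
            have hrch : Reaches P x b true := by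
              have := hedge_reach' r.head hrC hhS b false ⟨r, hr, rfl, Or.inl ⟨rfl, hb⟩⟩
              simpa using this
            exact hpar b (Or.inr ⟨_, hrch⟩) hrch
          · intro c hc
            have hrch : Reaches P x c false := by
              have := hedge_reach' r.head hrC hhS c true ⟨r, hr, rfl, Or.inr ⟨rfl, hc⟩⟩
              simpa using this
            exact Or.inr hrch
      obtain ⟨X, hXas⟩ := signed_exists_AS hsign
      -- closure of C x
      have hcl : ∀ r ∈ P, r.head ∈ C x → (∀ b ∈ r.pos, b ∈ C x) ∧ (∀ c ∈ r.neg, c ∈ C x) := by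
        intro r hr hh
        exact ⟨fun b hb => hCedge x r.head hh b false ⟨r, hr, rfl, Or.inl ⟨rfl, hb⟩⟩,
          fun c hc => hCedge x r.head hh c true ⟨r, hr, rfl, Or.inr ⟨rfl, hc⟩⟩⟩
      -- the evaluated top program
      set E := evalTop P (C x) X with hEdef
      have hEfin : E.Finite := by
        have : E ⊆ (fun r : GRule α => (⟨r.head, r.pos.filter (fun b => b ∉ C x),
            r.neg.filter (fun c => c ∉ C x)⟩ : GRule α)) '' P := by
          rintro r' ⟨r, hr, _, _, _, rfl⟩
          exact ⟨r, hr, by congr!⟩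
        exact (hfin.image _).subset this
      have hEolon : OLONFree E := olonFree_mono (fun _ _ _ h => edge_evalTop h) holon
      have hEatoms : atomsOf E ⊆ atomsOf P \ {x} := by
        rintro a ⟨r', ⟨r, hr, hB, _, _, rfl⟩, h2⟩
        rcases h2 with h2 | h2 | h2
        · subst h2
          exact ⟨⟨r, hr, Or.inl rfl⟩, fun h => hB (h ▸ hCself x)⟩
        · simp only [Finset.mem_filter] at h2
          exact ⟨⟨r, hr, Or.inr (Or.inl h2.1)⟩, fun h => h2.2 (h ▸ hCself x)⟩
        · simp only [Finset.mem_filter] at h2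
          exact ⟨⟨r, hr, Or.inr (Or.inr h2.1)⟩, fun h => h2.2 (h ▸ hCself x)⟩
      have hEcard : (atomsOf E).ncard ≤ n := by
        have h1 : (atomsOf P \ {x}).ncard = (atomsOf P).ncard - 1 :=
          Set.ncard_diff_singleton_of_mem hxA
        have h2 : (atomsOf E).ncard ≤ (atomsOf P \ {x}).ncard :=
          Set.ncard_le_ncard hEatoms hAfin.diff
        have h3 : 0 < (atomsOf P).ncard := (Set.ncard_pos hAfin).mpr ⟨x, hxA⟩
        omega
      obtain ⟨Y, hYas⟩ := ih E hEfin hEolon hEcard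
      exact ⟨X ∪ Y, AS_union hcl hXas hYas⟩

theorem exists_AS_of_olonFree {P : Set (GRule α)} (hfin : P.Finite)
    (holon : OLONFree P) : ∃ A, A ∈ AS P :=
  dung_aux (atomsOf P).ncard P hfin holon le_rfl

end Aux4

section Aux5
open ASP
variable {α ι : Type}

lemma worldProg_finite {P0 : Set (GRule α)} (h : P0.Finite) (atom : ι → α)
    (w : Finset ι) : (worldProg P0 atom w).Finite := by
  refine h.union ?_
  have : {r : GRule α | ∃ i ∈ w, r = ⟨atom i, ∅, ∅⟩}
      ⊆ (fun i => (⟨atom i, ∅, ∅⟩ : GRule α)) '' ↑w := by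
    rintro r ⟨i, hi, rfl⟩
    exact ⟨i, hi, rfl⟩
  exact ((w.finite_toSet).image _).subset this

lemma edge_worldProg {P0 : Set (GRule α)} {atom : ι → α} {w : Finset ι} {x y : α}
    {s : Bool} (h : Edge (worldProg P0 atom w) x y s) : Edge P0 x y s := by
  obtain ⟨r, hr, hh, hb⟩ := h
  rcases hr with hr | ⟨i, _, rfl⟩
  · exact ⟨r, hr, hh, hb⟩
  · rcases hb with ⟨_, hb⟩ | ⟨_, hb⟩ <;> simp at hb

lemma evalTop_finite {P : Set (GRule α)} (h : P.Finite) (B X : Set α) :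
    (evalTop P B X).Finite := by
  have hsub : evalTop P B X ⊆ (fun r : GRule α => (⟨r.head,
      r.pos.filter (fun b => b ∉ B), r.neg.filter (fun c => c ∉ B)⟩ : GRule α)) '' P := by
    rintro r' ⟨r, hr, _, _, _, rfl⟩
    exact ⟨r, hr, by congr!⟩
  exact (h.image _).subset hsub

/-- 1 : sum of world probabilities over a powerset is 1. -/
lemma sum_worldP_one (prob : ι → ℝ) (T : Finset ι) :
    ∑ u ∈ T.powerset, worldP prob T u = 1 := by
  have h := Finset.prod_add (fun i => prob i) (fun i => 1 - prob i) T
  have h2 : ∏ i ∈ T, (prob i + (1 - prob i)) = 1 := by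
    have he : ∀ i ∈ T, prob i + (1 - prob i) = 1 := fun i _ => by ring
    rw [Finset.prod_congr rfl he, Finset.prod_const_one]
  rw [← h2, h]
  exact Finset.sum_congr rfl fun u _ => rfl

lemma worldP_split (prob : ι → ℝ) {S1 S2 w1 w2 : Finset ι}
    (hd : ∀ i ∈ S2, i ∉ S1) (h1 : w1 ⊆ S1) (h2 : w2 ⊆ S2) :
    worldP prob (S1 ∪ S2) (w1 ∪ w2) = worldP prob S1 w1 * worldP prob S2 w2 := by
  have hdw : Disjoint w1 w2 :=
    Finset.disjoint_left.mpr fun i hi1 hi2 => hd i (h2 hi2) (h1 hi1)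
  have hset : (S1 ∪ S2) \ (w1 ∪ w2) = (S1 \ w1) ∪ (S2 \ w2) := by
    ext i
    simp only [Finset.mem_sdiff, Finset.mem_union]
    have e1 : i ∈ w1 → i ∈ S1 := fun h => h1 h
    have e2 : i ∈ w2 → i ∈ S2 := fun h => h2 h
    have e3 : i ∈ S2 → i ∉ S1 := hd i
    tauto
  have hdS : Disjoint (S1 \ w1) (S2 \ w2) :=
    Finset.disjoint_left.mpr fun i hi1 hi2 =>
      hd i (Finset.mem_sdiff.mp hi2).1 (Finset.mem_sdiff.mp hi1).1
  unfold worldP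
  rw [Finset.prod_union hdw, hset, Finset.prod_union hdS]
  ring

end Aux5


open ASP in
/-- For an OLON-free PASP and a relevance-closed subprogram `R` of `P₀`
containing the query atom `q`, the upper probability of `q` equals the upper probability
of `q` in the PASP on `R` restricted to the probabilistic indices whose atom occurs in `R`. -/
theorem UP_residual {α ι : Type} (P0 : Set (GRule α)) (atom : ι → α)
    (prob : ι → ℝ) (S : Finset ι) (q : α) (hpasp : IsPASP P0 atom prob S)
    (holon : OLONFree P0) (R : Set (GRule α)) (hrel : RelevanceClosed P0 R)
    (hq : q ∈ atomsOf R) :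
    UP P0 atom prob S q
      = UP R atom prob (S.filter fun i => atom i ∈ atomsOf R) q := by
  set B := atomsOf R with hBdef
  set SR := S.filter (fun i => atom i ∈ atomsOf R) with hSRdef
  -- the bottom of any world program is the corresponding world program of R
  have hbottom : ∀ w : Finset ι, w ⊆ S →
      {r ∈ worldProg P0 atom w | r.head ∈ B} = worldProg R atom (w ∩ SR) := by
    intro w hw
    ext r
    constructor
    · rintro ⟨hr | ⟨i, hi, rfl⟩, hB⟩
      · exact Or.inl (hrel.2 r hr hB)
      · refine Or.inr ⟨i, ?_, rfl⟩
        rw [Finset.mem_inter, hSRdef, Finset.mem_filter]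
        exact ⟨hi, hw hi, hB⟩
    · rintro (hr | ⟨i, hi, rfl⟩)
      · exact ⟨Or.inl (hrel.1 hr), ⟨r, hr, Or.inl rfl⟩⟩
      · rw [Finset.mem_inter, hSRdef, Finset.mem_filter] at hi
        exact ⟨Or.inr ⟨i, hi.1, rfl⟩, hi.2.2⟩
  -- closure of B in any world program
  have hcl : ∀ w : Finset ι,
      ∀ r ∈ worldProg P0 atom w, r.head ∈ B →
        (∀ b ∈ r.pos, b ∈ B) ∧ (∀ c ∈ r.neg, c ∈ B) := by
    intro w r hr hB
    rcases hr with hr | ⟨i, _, rfl⟩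
    · have hrR : r ∈ R := hrel.2 r hr hB
      exact ⟨fun b hb => ⟨r, hrR, Or.inr (Or.inl hb)⟩,
        fun c hc => ⟨r, hrR, Or.inr (Or.inr hc)⟩⟩
    · constructor <;> intro b hb <;> simp at hb
  -- key equivalence of conditions
  have key : ∀ w : Finset ι, w ⊆ S →
      ((∃ A ∈ AS (worldProg P0 atom w), q ∈ A) ↔
       (∃ X ∈ AS (worldProg R atom (w ∩ SR)), q ∈ X)) := by
    intro w hw
    constructor
    · rintro ⟨A, hA, hqA⟩
      refine ⟨A ∩ B, ?_, hqA, hq⟩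
      rw [← hbottom w hw]
      exact AS_inter (hcl w) hA
    · rintro ⟨X, hX, hqX⟩
      have hX' : X ∈ AS {r ∈ worldProg P0 atom w | r.head ∈ B} := by
        rw [hbottom w hw]; exact hX
      have hfinP : (worldProg P0 atom w).Finite := worldProg_finite hpasp.1 atom w
      have hPolon : OLONFree (worldProg P0 atom w) :=
        olonFree_mono (fun _ _ _ h => edge_worldProg h) holon
      have hEolon : OLONFree (evalTop (worldProg P0 atom w) B X) :=
        olonFree_mono (fun _ _ _ h => edge_evalTop h) hPolon
      obtain ⟨Y, hY⟩ := exists_AS_of_olonFree (evalTop_finite hfinP B X) hEolon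
      exact ⟨X ∪ Y, AS_union (hcl w) hX' hY, Or.inl hqX⟩
  -- now the sum manipulation
  set T := S \ SR with hTdef
  have hSRsub : SR ⊆ S := Finset.filter_subset _ _
  have hTd : ∀ i ∈ T, i ∉ SR := fun i hi => (Finset.mem_sdiff.mp hi).2
  have hST : SR ∪ T = S := Finset.union_sdiff_of_subset hSRsub
  have hsplit : ∀ w : Finset ι, w ⊆ S →
      worldP prob S w = worldP prob SR (w ∩ SR) * worldP prob T (w \ SR) := by
    intro w hw
    have hw' : (w ∩ SR) ∪ (w \ SR) = w := by
      ext i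
      simp only [Finset.mem_union, Finset.mem_inter, Finset.mem_sdiff]
      tauto
    have h2 : w \ SR ⊆ T := Finset.sdiff_subset_sdiff hw (le_refl SR)
    have hws := worldP_split prob (w1 := w ∩ SR) (w2 := w \ SR) hTd
      Finset.inter_subset_right h2
    rw [hw', hST] at hws
    exact hws
  rw [UP, UP, Finset.sum_filter, Finset.sum_filter]
  have hcongr : ∀ w ∈ S.powerset,
      (if (∃ A ∈ AS (worldProg P0 atom w), q ∈ A) then worldP prob S w else 0)
        = if (∃ X ∈ AS (worldProg R atom (w ∩ SR)), q ∈ X) then worldP prob S w else 0 :=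
    fun w hw => if_congr (key w (Finset.mem_powerset.mp hw)) rfl rfl
  rw [Finset.sum_congr rfl hcongr]
  calc ∑ w ∈ S.powerset,
        (if (∃ X ∈ AS (worldProg R atom (w ∩ SR)), q ∈ X) then worldP prob S w else 0)
      = ∑ p ∈ SR.powerset ×ˢ T.powerset,
        (if (∃ X ∈ AS (worldProg R atom p.1), q ∈ X)
          then worldP prob SR p.1 * worldP prob T p.2 else 0) := by
        refine Finset.sum_nbij' (fun w => (w ∩ SR, w \ SR)) (fun p => p.1 ∪ p.2)
          ?_ ?_ ?_ ?_ ?_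
        · intro w hw
          rw [Finset.mem_product]
          exact ⟨Finset.mem_powerset.mpr Finset.inter_subset_right,
            Finset.mem_powerset.mpr
              (Finset.sdiff_subset_sdiff (Finset.mem_powerset.mp hw) (le_refl SR))⟩
        · intro p hp
          rw [Finset.mem_product] at hp
          refine Finset.mem_powerset.mpr (Finset.union_subset ?_ ?_)
          · exact (Finset.mem_powerset.mp hp.1).trans hSRsub
          · exact (Finset.mem_powerset.mp hp.2).trans (Finset.sdiff_subset)
        · intro w hw
          ext i
          simp only [Finset.mem_union, Finset.mem_inter, Finset.mem_sdiff]
          tauto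
        · intro p hp
          rw [Finset.mem_product] at hp
          have hp1 : p.1 ⊆ SR := Finset.mem_powerset.mp hp.1
          have hp2 : p.2 ⊆ T := Finset.mem_powerset.mp hp.2
          have hd1 : ∀ i ∈ p.2, i ∉ SR := fun i hi => hTd i (hp2 hi)
          refine Prod.ext ?_ ?_
          · ext i
            simp only [Finset.mem_inter, Finset.mem_union]
            constructor
            · rintro ⟨h | h, hSR⟩
              · exact h
              · exact absurd hSR (hd1 i h)
            · intro h
              exact ⟨Or.inl h, hp1 h⟩
          · ext i
            simp only [Finset.mem_sdiff, Finset.mem_union]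
            constructor
            · rintro ⟨h | h, hSR⟩
              · exact absurd (hp1 h) hSR
              · exact h
            · intro h
              exact ⟨Or.inr h, hd1 i h⟩
        · intro w hw
          have hw' : w ⊆ S := Finset.mem_powerset.mp hw
          exact if_congr Iff.rfl (hsplit w hw') rfl
    _ = ∑ v ∈ SR.powerset, ∑ u ∈ T.powerset,
          (if (∃ X ∈ AS (worldProg R atom v), q ∈ X)
            then worldP prob SR v * worldP prob T u else 0) := Finset.sum_product _ _ _
    _ = ∑ v ∈ SR.powerset,
          (if (∃ X ∈ AS (worldProg R atom v), q ∈ X) then worldP prob SR v else 0) := by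
        refine Finset.sum_congr rfl fun v _ => ?_
        by_cases h : ∃ X ∈ AS (worldProg R atom v), q ∈ X
        · simp only [h, if_true, ← Finset.mul_sum]
          rw [sum_worldP_one, mul_one]
        · simp only [h, if_false, Finset.sum_const_zero]
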